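/- Let 1 < q ≤ p < ∞, and let E ⊆ ℝⁿ have finite Lebesgue measure. Then χ_E has absolutely continuous norm in M^p_q(ℝⁿ): for every sequence of measurable sets F_k with χ_{F_k} → 0 pointwise a.e., one has ‖χ_E χ_{F_k}‖_{M^p_q} → 0. -/

import Mathlib

open MeasureTheory ENNReal Set Filter

/-- The open axis-parallel cube with corner `a` and side length `s`. -/
noncomputable def cube (n : ℕ) (a : Fin n → ℝ) (s : ℝ) : Set (Fin n → ℝ) :=
  Set.univ.pi fun i => Set.Ioo (a i) (a i + s)

/-- The Morrey norm `‖f‖_{M^p_q}` on `ℝⁿ`. -/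
noncomputable def morreyNorm (n : ℕ) (p q : ℝ) (f : (Fin n → ℝ) → ℝ) : ℝ≥0∞ :=
  ⨆ (a : Fin n → ℝ) (s : ℝ) (_ : 0 < s),
    ENNReal.ofReal ((s ^ n) ^ (1 / p - 1 / q)) *
      (∫⁻ x in cube n a s, ENNReal.ofReal (|f x| ^ q)) ^ (1 / q)

/-- The Hölder conjugate exponent `p' = p/(p-1)`. -/
noncomputable def conjExp (p : ℝ) : ℝ := p / (p - 1)

/-- A `(p',q')`-block: a measurable function supported on a cube `Q` with
`‖b‖_{L^{q'}} ≤ |Q|^{1/p-1/q}`. -/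
def IsBlock (n : ℕ) (p q : ℝ) (b : (Fin n → ℝ) → ℝ) : Prop :=
  Measurable b ∧ ∃ (a : Fin n → ℝ) (s : ℝ), 0 < s ∧
    Function.support b ⊆ cube n a s ∧
    (∫⁻ x, ENNReal.ofReal (|b x| ^ conjExp q)) ^ (1 / conjExp q) ≤
      ENNReal.ofReal ((s ^ n) ^ (1 / p - 1 / q))

/-- `f = ∑ₖ λₖ bₖ` a.e. with absolutely convergent coefficients and `(p',q')`-blocks. -/
def IsBlockRep (n : ℕ) (p q : ℝ) (f : (Fin n → ℝ) → ℝ) (l : ℕ → ℝ)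
    (b : ℕ → (Fin n → ℝ) → ℝ) : Prop :=
  (∀ k, IsBlock n p q (b k)) ∧ Summable (fun k => |l k|) ∧
    ∀ᵐ x : Fin n → ℝ, Summable (fun k => l k * b k x) ∧ f x = ∑' k, l k * b k x

/-- Membership in the block space `B^{p'}_{q'}(ℝⁿ)`. -/
def MemBlockSpace (n : ℕ) (p q : ℝ) (f : (Fin n → ℝ) → ℝ) : Prop :=
  ∃ l b, IsBlockRep n p q f l b

/-- The block space norm `‖f‖_{B^{p'}_{q'}}`: infimal `ℓ¹`-sum of coefficients. -/
noncomputable def blockNorm (n : ℕ) (p q : ℝ) (f : (Fin n → ℝ) → ℝ) : ℝ≥0∞ :=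
  ⨅ (l : ℕ → ℝ) (b : ℕ → (Fin n → ℝ) → ℝ) (_ : IsBlockRep n p q f l b),
    ENNReal.ofReal (∑' k, |l k|)

/-- for any set E of finite measure, χ_E has absolutely continuous norm
in M^p_q: if χ_{F_k} → 0 a.e. then ‖χ_E χ_{F_k}‖_{M^p_q} → 0. -/
theorem stmt14 (n : ℕ) (p q : ℝ) (hq : 1 < q) (hqp : q ≤ p)
    (E : Set (Fin n → ℝ)) (hE : MeasurableSet E) (hEfin : volume E < ⊤)
    (F : ℕ → Set (Fin n → ℝ)) (hF : ∀ k, MeasurableSet (F k))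
    (hlim : ∀ᵐ x : Fin n → ℝ,
      Tendsto (fun k => (F k).indicator (fun _ => (1 : ℝ)) x) atTop (nhds 0)) :
    Tendsto (fun k => morreyNorm n p q ((E ∩ F k).indicator fun _ => (1 : ℝ)))
      atTop (nhds 0) := by
  have hq0 : (0:ℝ) < q := lt_trans one_pos hq
  have hp0 : (0:ℝ) < p := lt_of_lt_of_le hq0 hqp
  set m : ℕ → ℝ≥0∞ := fun k => volume (E ∩ F k) with hmdef
  have hmeas : ∀ k, MeasurableSet (E ∩ F k) := fun k => hE.inter (hF k)
  -- Step 1: m k → 0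
  have hm0 : Tendsto m atTop (nhds 0) := by
    have h1 : ∀ k, m k = ∫⁻ x, (E ∩ F k).indicator (fun _ => (1:ℝ≥0∞)) x := by
      intro k
      rw [lintegral_indicator (hmeas k) _, setLIntegral_one]
    have h2 : Tendsto (fun k => ∫⁻ x, (E ∩ F k).indicator (fun _ => (1:ℝ≥0∞)) x)
        atTop (nhds (∫⁻ _x : Fin n → ℝ, (0:ℝ≥0∞))) := by
      apply tendsto_lintegral_of_dominated_convergence (E.indicator fun _ => (1:ℝ≥0∞))
      · exact fun k => (measurable_const.indicator (hmeas k))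
      · intro k
        filter_upwards with x
        exact Set.indicator_le_indicator_of_subset inter_subset_left (fun _ => zero_le) x
      · rw [lintegral_indicator hE _, setLIntegral_one]
        exact hEfin.ne
      · filter_upwards [hlim] with x hx
        have hev : ∀ᶠ k in atTop, x ∉ F k := by
          filter_upwards [hx.eventually_lt_const one_pos] with k hk
          intro hxk
          simp [Set.indicator_of_mem hxk] at hk
        refine Tendsto.congr' ?_ tendsto_const_nhds
        filter_upwards [hev] with k hk
        have hx2 : x ∉ E ∩ F k := fun h => hk h.2
        simp [Set.indicator_of_notMem hx2]
    simpa [lintegral_zero, ← h1] using h2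
  -- Step 2: the bound
  have hbound : ∀ k, morreyNorm n p q ((E ∩ F k).indicator fun _ => (1:ℝ)) ≤ m k ^ (1/p) := by
    intro k
    refine iSup_le fun a => iSup_le fun s => iSup_le fun hs => ?_
    have hint : (∫⁻ x in cube n a s,
        ENNReal.ofReal (|((E ∩ F k).indicator fun _ => (1:ℝ)) x| ^ q))
        = volume ((E ∩ F k) ∩ cube n a s) := by
      have hpt : ∀ x, ENNReal.ofReal (|((E ∩ F k).indicator fun _ => (1:ℝ)) x| ^ q)
          = (E ∩ F k).indicator (fun _ => (1:ℝ≥0∞)) x := by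
        intro x
        by_cases hx : x ∈ E ∩ F k
        · simp [Set.indicator_of_mem hx, Real.one_rpow]
        · simp [Set.indicator_of_notMem hx, Real.zero_rpow hq0.ne']
      simp_rw [hpt]
      rw [lintegral_indicator (hmeas k) _, setLIntegral_one, Measure.restrict_apply (hmeas k)]
    rw [hint]
    set I := volume ((E ∩ F k) ∩ cube n a s) with hIdef
    have hsn : (0:ℝ) < s ^ n := pow_pos hs n
    set V : ℝ≥0∞ := ENNReal.ofReal (s ^ n) with hVdef
    have hV0 : V ≠ 0 := by simp [hVdef, ENNReal.ofReal_pos.mpr hsn, ne_of_gt]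
    have hVtop : V ≠ ⊤ := ENNReal.ofReal_ne_top
    have hcube : volume (cube n a s) = V := by
      rw [cube, volume_pi_pi]
      simp [Real.volume_Ioo, hVdef, ← ENNReal.ofReal_pow hs.le]
    have hIV : I ≤ V := by
      rw [← hcube]; exact measure_mono inter_subset_right
    have hIm : I ≤ m k := measure_mono inter_subset_left
    have hItop : I ≠ ⊤ :=
      (lt_of_le_of_lt (hIm.trans (measure_mono inter_subset_left)) hEfin).ne
    have hofr : ENNReal.ofReal ((s ^ n) ^ (1/p - 1/q)) = V ^ (1/p - 1/q) :=
      (ENNReal.ofReal_rpow_of_pos hsn).symm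
    rw [hofr]
    by_cases hI0 : I = 0
    · rw [hI0, ENNReal.zero_rpow_of_pos (by positivity), mul_zero]
      exact zero_le
    have hr : 1/p - 1/q ≤ 0 := by
      have : 1/p ≤ 1/q := one_div_le_one_div_of_le hq0 hqp
      linarith
    have hsplit : I ^ (1/q) = I ^ (1/p) * I ^ (-(1/p - 1/q)) := by
      rw [← ENNReal.rpow_add _ _ hI0 hItop]
      ring_nf
    rw [hsplit]
    calc V ^ (1/p - 1/q) * (I ^ (1/p) * I ^ (-(1/p - 1/q)))
        = (V ^ (1/p - 1/q) * I ^ (-(1/p - 1/q))) * I ^ (1/p) := by ring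
      _ ≤ (V ^ (1/p - 1/q) * V ^ (-(1/p - 1/q))) * I ^ (1/p) := by
          exact mul_le_mul' (mul_le_mul' le_rfl
            (ENNReal.rpow_le_rpow hIV (by linarith : (0:ℝ) ≤ -(1/p - 1/q)))) le_rfl
      _ = I ^ (1/p) := by
          rw [← ENNReal.rpow_add _ _ hV0 hVtop]
          simp
      _ ≤ m k ^ (1/p) := ENNReal.rpow_le_rpow hIm (by positivity)
  -- Step 3: squeeze
  have htend : Tendsto (fun k => m k ^ (1/p)) atTop (nhds 0) := by
    have := hm0.ennrpow_const (1/p)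
    rwa [ENNReal.zero_rpow_of_pos (by positivity)] at this
  exact tendsto_of_tendsto_of_tendsto_of_le_of_le tendsto_const_nhds htend
    (fun k => zero_le) hbound
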